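/- Let ρ1, ρ2 ∈ (0,1), let n ≥ 1 and m = 2n, and let m1, m2 be positive integers with m1 + m2 = m and |m1 − m·log ρ2/(log ρ1 + log ρ2)| ≤ 1/2. Set ρ = exp( (log ρ1 · log ρ2)/(log ρ1 + log ρ2) ). Let Z1 be a monic polynomial of degree m1 with real coefficients, all roots in [√(−b1), √(−a1)], and sup_{u ∈ [√(−b1),√(−a1)]} |Z1(u)/Z1(−u)| ≤ 2·ρ1^{m1}; let Z2 be a monic polynomial of degree m2 with real coefficients, all roots in [√(a2), √(b2)], and sup_{u ∈ [√(a2),√(b2)]} |Z2(u)/Z2(−u)| ≤ 2·ρ2^{m2}. Define H(s) = Z1(−i s)·Z2(s) and let P, Q be the unique complex polynomials with deg P ≤ n−1, deg Q ≤ n and H(s) = −s·P(s²) + Q(s²) for all s. If 2·max{ρ1^{−1/2}, ρ2^{−1/2}}·ρ^m < 1, then for every z ∈ K one has Q(z) ≠ 0 and |P(z)/(Q(z)·F(z)) − 1| ≤ 4·max{ρ1^{−1/2}, ρ2^{−1/2}}·ρ^m / (1 − 2·max{ρ1^{−1/2}, ρ2^{−1/2}}·ρ^m). -/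

import Mathlib

open Polynomial Complex

/-- The limiting-absorption branch of the inverse square root on the nonzero reals:
`F(z) = z^{−1/2}` for `z > 0` and `F(z) = −i·(−z)^{−1/2}` for `z < 0`. -/
noncomputable def Fbranch (z : ℝ) : ℂ :=
  if 0 < z then ((Real.sqrt z : ℂ))⁻¹ else -Complex.I * ((Real.sqrt (-z) : ℂ))⁻¹

lemma evalC_ofReal (p : ℝ[X]) (x : ℝ) :
    (p.map (algebraMap ℝ ℂ)).eval (x : ℂ) = ((p.eval x : ℝ) : ℂ) := by
  rw [eval_map, ← aeval_def]; exact Polynomial.aeval_ofReal p x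

lemma evalC_conj (p : ℝ[X]) (w : ℂ) :
    (p.map (algebraMap ℝ ℂ)).eval ((starRingEnd ℂ) w) =
      (starRingEnd ℂ) ((p.map (algebraMap ℝ ℂ)).eval w) := by
  rw [eval_map, ← aeval_def, eval_map, ← aeval_def, Polynomial.aeval_conj]

lemma key_ratio (s Pz Qz A B : ℂ) (ε : ℝ)
    (hA : A = -s * Pz + Qz) (hB : B = s * Pz + Qz)
    (hBne : B ≠ 0) (habs : ‖A‖ ≤ ε * ‖B‖) (hε1 : ε < 1) :
    Qz ≠ 0 ∧ ‖Pz / (Qz * s⁻¹) - 1‖ ≤ 2 * ε / (1 - ε) := by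
  have hB0 : 0 < ‖B‖ := norm_pos_iff.mpr hBne
  have hA0 : 0 ≤ ‖A‖ := norm_nonneg _
  have hε0 : 0 ≤ ε := by nlinarith
  have hAB : ‖A‖ < ‖B‖ := lt_of_le_of_lt habs (by nlinarith)
  have htri : ‖B‖ ≤ ‖A + B‖ + ‖A‖ := by
    calc ‖B‖ = ‖A + B + -A‖ := by ring_nf
    _ ≤ ‖A + B‖ + ‖-A‖ := norm_add_le _ _
    _ = ‖A + B‖ + ‖A‖ := by rw [norm_neg]
  have hABpos : 0 < ‖A + B‖ := by linarith
  have hABne : A + B ≠ 0 := by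
    intro h; rw [h] at hABpos; simp at hABpos
  have hQ : Qz = (A + B) / 2 := by rw [hA, hB]; ring
  have hsP : s * Pz = (B - A) / 2 := by rw [hA, hB]; ring
  have hQne : Qz ≠ 0 := by rw [hQ]; exact div_ne_zero hABne two_ne_zero
  refine ⟨hQne, ?_⟩
  have hexp : Pz / (Qz * s⁻¹) - 1 = -2 * A / (A + B) := by
    have h1 : Pz / (Qz * s⁻¹) = (s * Pz) / Qz := by
      field_simp
    rw [h1, hsP, hQ]
    field_simp
    ring
  rw [hexp, norm_div, norm_mul]
  have habs2 : ‖(-2 : ℂ)‖ = 2 := by simp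
  rw [habs2]
  have hge : (1 - ε) * ‖B‖ ≤ ‖A + B‖ := by nlinarith
  have h3 : (0:ℝ) < (1 - ε) * ‖B‖ := by nlinarith
  calc 2 * ‖A‖ / ‖A + B‖
      ≤ 2 * ε * ‖B‖ / ((1 - ε) * ‖B‖) := by
        apply div_le_div₀ (by positivity) (by nlinarith) h3 hge
    _ = 2 * ε / (1 - ε) := by
        rw [mul_div_mul_right _ _ (ne_of_gt hB0)]

lemma sup_ratio (p : ℝ[X]) (lo hi C : ℝ)
    (hne : ∀ u ∈ Set.Icc lo hi, p.eval (-u) ≠ 0)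
    (hsup : sSup ((fun u : ℝ => |p.eval u / p.eval (-u)|) '' Set.Icc lo hi) ≤ C)
    (s : ℝ) (hs : s ∈ Set.Icc lo hi) :
    |p.eval s| ≤ C * |p.eval (-s)| := by
  have hcont : ContinuousOn (fun u : ℝ => |p.eval u / p.eval (-u)|) (Set.Icc lo hi) := by
    apply ContinuousOn.abs
    exact ContinuousOn.div (p.continuous_aeval.continuousOn)
      ((p.continuous_aeval.comp continuous_neg).continuousOn) hne
  have hbdd : BddAbove ((fun u : ℝ => |p.eval u / p.eval (-u)|) '' Set.Icc lo hi) :=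
    (isCompact_Icc.image_of_continuousOn hcont).bddAbove
  have hle : |p.eval s / p.eval (-s)| ≤ C :=
    le_trans (le_csSup hbdd ⟨s, hs, rfl⟩) hsup
  rw [abs_div, div_le_iff₀ (abs_pos.mpr (hne s hs))] at hle
  linarith [hle]

lemma arith (L1 L2 : ℝ) (hL1 : L1 < 0) (hL2 : L2 < 0) (μ N : ℝ)
    (hbal : |μ - N * L2 / (L1 + L2)| ≤ 1 / 2) :
    μ * L1 ≤ L1 * (-(1/2)) + N * (L1 * L2 / (L1 + L2)) := by
  have hsum : L1 + L2 < 0 := by linarith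
  have h := abs_le.mp hbal
  have key : N * (L1 * L2 / (L1 + L2)) = (N * L2 / (L1 + L2)) * L1 := by
    field_simp
  rw [key]
  nlinarith [h.1, h.2, mul_nonneg (by linarith [h.1] : (0:ℝ) ≤ μ - N * L2 / (L1 + L2) + 1/2)
    (by linarith : (0:ℝ) ≤ -L1)]

set_option maxHeartbeats 2000000 in
theorem stmt6 (a1 b1 a2 b2 : ℝ) (hab1 : a1 < b1) (hb1 : b1 < 0) (ha2 : 0 < a2)
    (hab2 : a2 < b2) (ρ1 ρ2 : ℝ) (hρ1 : ρ1 ∈ Set.Ioo (0 : ℝ) 1) (hρ2 : ρ2 ∈ Set.Ioo (0 : ℝ) 1)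
    (n : ℕ) (hn : 1 ≤ n) (m1 m2 : ℕ) (hm1 : 0 < m1) (hm2 : 0 < m2) (hm : m1 + m2 = 2 * n)
    (hbal : |(m1 : ℝ) - (2 * n : ℕ) * Real.log ρ2 / (Real.log ρ1 + Real.log ρ2)| ≤ 1 / 2)
    (ρ : ℝ) (hρ : ρ = Real.exp (Real.log ρ1 * Real.log ρ2 / (Real.log ρ1 + Real.log ρ2)))
    (Z1 Z2 : Polynomial ℝ)
    (hZ1monic : Z1.Monic) (hZ1deg : Z1.natDegree = m1)
    (hZ1roots : ∀ z : ℂ, Polynomial.aeval z Z1 = 0 →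
      ∃ x ∈ Set.Icc (Real.sqrt (-b1)) (Real.sqrt (-a1)), z = (x : ℂ))
    (hZ1sup : sSup ((fun u : ℝ => |Z1.eval u / Z1.eval (-u)|) ''
      Set.Icc (Real.sqrt (-b1)) (Real.sqrt (-a1))) ≤ 2 * ρ1 ^ m1)
    (hZ2monic : Z2.Monic) (hZ2deg : Z2.natDegree = m2)
    (hZ2roots : ∀ z : ℂ, Polynomial.aeval z Z2 = 0 →
      ∃ x ∈ Set.Icc (Real.sqrt a2) (Real.sqrt b2), z = (x : ℂ))
    (hZ2sup : sSup ((fun u : ℝ => |Z2.eval u / Z2.eval (-u)|) ''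
      Set.Icc (Real.sqrt a2) (Real.sqrt b2)) ≤ 2 * ρ2 ^ m2)
    (P Q : Polynomial ℂ) (hPdeg : P.degree ≤ (n - 1 : ℕ)) (hQdeg : Q.degree ≤ (n : ℕ))
    (hsplit : ∀ s : ℂ,
      (Z1.map (algebraMap ℝ ℂ)).eval (-(Complex.I * s)) * (Z2.map (algebraMap ℝ ℂ)).eval s =
        -s * P.eval (s ^ 2) + Q.eval (s ^ 2))
    (hcond : 2 * max (ρ1 ^ (-(1 / 2) : ℝ)) (ρ2 ^ (-(1 / 2) : ℝ)) * ρ ^ (2 * n) < 1) :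
    ∀ z ∈ Set.Icc a1 b1 ∪ Set.Icc a2 b2,
      Q.eval (z : ℂ) ≠ 0 ∧
      ‖P.eval (z : ℂ) / (Q.eval (z : ℂ) * Fbranch z) - 1‖ ≤
        4 * max (ρ1 ^ (-(1 / 2) : ℝ)) (ρ2 ^ (-(1 / 2) : ℝ)) * ρ ^ (2 * n) /
          (1 - 2 * max (ρ1 ^ (-(1 / 2) : ℝ)) (ρ2 ^ (-(1 / 2) : ℝ)) * ρ ^ (2 * n)) := by
  intro z hz
  have hρ1p : 0 < ρ1 := hρ1.1
  have hρ2p : 0 < ρ2 := hρ2.1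
  set L1 := Real.log ρ1 with hL1def
  set L2 := Real.log ρ2 with hL2def
  have hL1 : L1 < 0 := Real.log_neg hρ1.1 hρ1.2
  have hL2 : L2 < 0 := Real.log_neg hρ2.1 hρ2.2
  have hsum : L1 + L2 < 0 := by linarith
  set M := max (ρ1 ^ (-(1/2) : ℝ)) (ρ2 ^ (-(1/2) : ℝ)) with hMdef
  have hρpos : 0 < ρ := by rw [hρ]; exact Real.exp_pos _
  have hρpow : 0 < ρ ^ (2*n) := pow_pos hρpos _
  push_cast at hbal
  -- balance for m2
  have hbal2 : |(m2 : ℝ) - (2 * (n:ℝ)) * L1 / (L1 + L2)| ≤ 1 / 2 := by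
    have hmr : (m1:ℝ) + m2 = 2 * n := by exact_mod_cast hm
    have heq : (m2 : ℝ) - (2 * (n:ℝ)) * L1 / (L1 + L2)
        = -((m1:ℝ) - 2 * (n:ℝ) * L2 / (L1 + L2)) := by
      have h2n : 2*(n:ℝ)*L1/(L1+L2) + 2*(n:ℝ)*L2/(L1+L2) = 2*(n:ℝ) := by
        rw [← add_div, ← mul_add, mul_div_assoc, div_self (ne_of_lt hsum), mul_one]
      linarith
    rw [heq, abs_neg]
    exact hbal
  have key1 : ρ1 ^ m1 ≤ ρ1 ^ (-(1/2) : ℝ) * ρ ^ (2*n) := by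
    have e1 : ρ1 ^ m1 = Real.exp ((m1:ℝ) * L1) := by
      rw [Real.exp_nat_mul, Real.exp_log hρ1.1]
    have e2 : ρ1 ^ (-(1/2) : ℝ) = Real.exp (L1 * (-(1/2))) := by
      rw [Real.rpow_def_of_pos hρ1.1]
    have e3 : ρ ^ (2*n) = Real.exp (((2*n : ℕ):ℝ) * (L1 * L2 / (L1 + L2))) := by
      rw [hρ, ← Real.exp_nat_mul]
    rw [e1, e2, e3, ← Real.exp_add, Real.exp_le_exp]
    have := arith L1 L2 hL1 hL2 (m1:ℝ) (2*(n:ℝ)) hbal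
    push_cast
    linarith
  have key2 : ρ2 ^ m2 ≤ ρ2 ^ (-(1/2) : ℝ) * ρ ^ (2*n) := by
    have e1 : ρ2 ^ m2 = Real.exp ((m2:ℝ) * L2) := by
      rw [Real.exp_nat_mul, Real.exp_log hρ2.1]
    have e2 : ρ2 ^ (-(1/2) : ℝ) = Real.exp (L2 * (-(1/2))) := by
      rw [Real.rpow_def_of_pos hρ2.1]
    have e3 : ρ ^ (2*n) = Real.exp (((2*n : ℕ):ℝ) * (L1 * L2 / (L1 + L2))) := by
      rw [hρ, ← Real.exp_nat_mul]
    rw [e1, e2, e3, ← Real.exp_add, Real.exp_le_exp]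
    have hbal2' : |(m2:ℝ) - (2*(n:ℝ)) * L1 / (L2 + L1)| ≤ 1/2 := by
      rw [add_comm L2 L1]; exact hbal2
    have := arith L2 L1 hL2 hL1 (m2:ℝ) (2*(n:ℝ)) hbal2'
    push_cast
    have hcomm : L2 * L1 / (L2 + L1) = L1 * L2 / (L1 + L2) := by rw [add_comm L2 L1, mul_comm L2 L1]
    rw [hcomm] at this
    linarith
  have hM1 : ρ1 ^ (-(1/2) : ℝ) ≤ M := le_max_left _ _
  have hM2 : ρ2 ^ (-(1/2) : ℝ) ≤ M := le_max_right _ _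
  have hεlt : 2 * M * ρ ^ (2*n) < 1 := hcond
  have hb1' : 2 * ρ1 ^ m1 ≤ 2 * M * ρ ^ (2*n) := by nlinarith
  have hb2' : 2 * ρ2 ^ m2 ≤ 2 * M * ρ ^ (2*n) := by nlinarith
  -- nonvanishing facts
  have hsb1 : 0 < Real.sqrt (-b1) := Real.sqrt_pos.mpr (by linarith)
  have hsa2 : 0 < Real.sqrt a2 := Real.sqrt_pos.mpr ha2
  have hZ1neR : ∀ u : ℝ, u < Real.sqrt (-b1) → Z1.eval u ≠ 0 := by
    intro u hu h
    have h0 : Polynomial.aeval ((u:ℝ):ℂ) Z1 = 0 := by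
      rw [Polynomial.aeval_def, ← Polynomial.eval_map, evalC_ofReal, h]; simp
    obtain ⟨x, hx, hxe⟩ := hZ1roots _ h0
    have : u = x := by exact_mod_cast hxe
    linarith [hx.1]
  have hZ2neR : ∀ u : ℝ, u < Real.sqrt a2 → Z2.eval u ≠ 0 := by
    intro u hu h
    have h0 : Polynomial.aeval ((u:ℝ):ℂ) Z2 = 0 := by
      rw [Polynomial.aeval_def, ← Polynomial.eval_map, evalC_ofReal, h]; simp
    obtain ⟨x, hx, hxe⟩ := hZ2roots _ h0
    have : u = x := by exact_mod_cast hxe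
    linarith [hx.1]
  have hZ1neI : ∀ c : ℂ, c.im ≠ 0 → (Z1.map (algebraMap ℝ ℂ)).eval c ≠ 0 := by
    intro c hc h
    have h0 : Polynomial.aeval c Z1 = 0 := by rwa [Polynomial.aeval_def, ← Polynomial.eval_map]
    obtain ⟨x, hx, rfl⟩ := hZ1roots _ h0
    exact hc (by simp)
  have hZ2neI : ∀ c : ℂ, c.im ≠ 0 → (Z2.map (algebraMap ℝ ℂ)).eval c ≠ 0 := by
    intro c hc h
    have h0 : Polynomial.aeval c Z2 = 0 := by rwa [Polynomial.aeval_def, ← Polynomial.eval_map]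
    obtain ⟨x, hx, rfl⟩ := hZ2roots _ h0
    exact hc (by simp)
  have hfinal : 2 * (2 * M * ρ ^ (2*n)) / (1 - (2 * M * ρ ^ (2*n)))
      = 4 * M * ρ ^ (2*n) / (1 - 2 * M * ρ ^ (2*n)) := by
    congr 1; ring
  rcases hz with hz | hz
  · -- z ∈ [a1, b1] : negative branch
    have hzneg : z < 0 := lt_of_le_of_lt hz.2 hb1
    set t := Real.sqrt (-z) with htdef
    have htmem : t ∈ Set.Icc (Real.sqrt (-b1)) (Real.sqrt (-a1)) :=
      ⟨Real.sqrt_le_sqrt (by linarith [hz.2]), Real.sqrt_le_sqrt (by linarith [hz.1])⟩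
    have htpos : 0 < t := lt_of_lt_of_le hsb1 htmem.1
    have ht2 : t ^ 2 = -z := Real.sq_sqrt (by linarith)
    set sC : ℂ := Complex.I * (t:ℂ) with hsCdef
    have htC2 : ((t:ℝ):ℂ) ^ 2 = ((-z : ℝ) : ℂ) := by exact_mod_cast congrArg (fun r : ℝ => (r:ℂ)) ht2
    have hsC2 : sC ^ 2 = (z:ℂ) := by
      rw [hsCdef, mul_pow, Complex.I_sq, htC2]; push_cast; ring
    have hsne : sC ≠ 0 := mul_ne_zero Complex.I_ne_zero (by exact_mod_cast htpos.ne')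
    have hA := hsplit sC
    have hB := hsplit (-sC)
    rw [hsC2] at hA
    rw [show (-sC) ^ 2 = (z:ℂ) by rw [← hsC2]; ring, neg_neg] at hB
    rw [show -(Complex.I * sC) = ((t:ℝ):ℂ) by
      rw [hsCdef, ← mul_assoc, Complex.I_mul_I]; ring] at hA
    rw [show -(Complex.I * -sC) = (((-t : ℝ)):ℂ) by
      rw [hsCdef, show -(Complex.I * -(Complex.I * ((t:ℝ):ℂ))) = Complex.I * Complex.I * ((t:ℝ):ℂ) from by ring,
        Complex.I_mul_I]; push_cast; ring] at hB
    rw [evalC_ofReal] at hA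
    rw [evalC_ofReal] at hB
    -- conjugate trick for Z2 factor
    have hconj : (Z2.map (algebraMap ℝ ℂ)).eval (-sC) = (starRingEnd ℂ) ((Z2.map (algebraMap ℝ ℂ)).eval sC) := by
      rw [← evalC_conj]
      congr 1
      rw [hsCdef]
      simp [Complex.ext_iff]
    have habsZ2 : ‖(Z2.map (algebraMap ℝ ℂ)).eval (-sC)‖
        = ‖(Z2.map (algebraMap ℝ ℂ)).eval sC‖ := by
      rw [hconj, Complex.norm_conj]
    have hZ1t : |Z1.eval t| ≤ (2 * ρ1 ^ m1) * |Z1.eval (-t)| := by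
      apply sup_ratio Z1 _ _ _ _ hZ1sup t htmem
      intro u hu
      exact hZ1neR (-u) (by linarith [hu.1])
    have hZ1mt : Z1.eval (-t) ≠ 0 := hZ1neR (-t) (by linarith)
    have hBne : ((Z1.eval (-t) : ℝ) : ℂ) * (Z2.map (algebraMap ℝ ℂ)).eval (-sC) ≠ 0 := by
      apply mul_ne_zero (Complex.ofReal_ne_zero.mpr hZ1mt)
      apply hZ2neI
      rw [hsCdef]
      simp [htpos.ne']
    have habs : ‖((Z1.eval t : ℝ) : ℂ) * (Z2.map (algebraMap ℝ ℂ)).eval sC‖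
        ≤ (2 * M * ρ ^ (2*n)) * ‖((Z1.eval (-t) : ℝ) : ℂ) * (Z2.map (algebraMap ℝ ℂ)).eval (-sC)‖ := by
      rw [norm_mul, norm_mul, habsZ2, Complex.norm_real, Complex.norm_real, Real.norm_eq_abs, Real.norm_eq_abs]
      have hX : 0 ≤ ‖(Z2.map (algebraMap ℝ ℂ)).eval sC‖ := norm_nonneg _
      have h1 : |Z1.eval t| * ‖(Z2.map (algebraMap ℝ ℂ)).eval sC‖
          ≤ (2 * ρ1 ^ m1) * (|Z1.eval (-t)| * ‖(Z2.map (algebraMap ℝ ℂ)).eval sC‖) := by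
        rw [← mul_assoc]
        exact mul_le_mul_of_nonneg_right hZ1t hX
      have h2 : (2 * ρ1 ^ m1) * (|Z1.eval (-t)| * ‖(Z2.map (algebraMap ℝ ℂ)).eval sC‖)
          ≤ (2 * M * ρ ^ (2*n)) * (|Z1.eval (-t)| * ‖(Z2.map (algebraMap ℝ ℂ)).eval sC‖) := by
        apply mul_le_mul_of_nonneg_right hb1'
        positivity
      linarith
    obtain ⟨hQne, hbound⟩ := key_ratio sC (P.eval (z:ℂ)) (Q.eval (z:ℂ)) _ _
      (2 * M * ρ ^ (2*n)) hA hB hBne habs hεlt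
    refine ⟨hQne, ?_⟩
    have hF : Fbranch z = sC⁻¹ := by
      unfold Fbranch
      rw [if_neg (by linarith : ¬ 0 < z), hsCdef, mul_inv, Complex.inv_I]
    rw [hF, ← hfinal]
    exact hbound
  · -- z ∈ [a2, b2] : positive branch
    have hzpos : 0 < z := lt_of_lt_of_le ha2 hz.1
    set s := Real.sqrt z with hsdef
    have hsmem : s ∈ Set.Icc (Real.sqrt a2) (Real.sqrt b2) :=
      ⟨Real.sqrt_le_sqrt hz.1, Real.sqrt_le_sqrt hz.2⟩
    have hspos : 0 < s := lt_of_lt_of_le hsa2 hsmem.1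
    have hs2 : s ^ 2 = z := Real.sq_sqrt (by linarith)
    set sC : ℂ := ((s:ℝ):ℂ) with hsCdef
    have hsC2 : sC ^ 2 = (z:ℂ) := by rw [hsCdef]; exact_mod_cast hs2
    have hsne : sC ≠ 0 := by rw [hsCdef]; exact_mod_cast hspos.ne'
    have hA := hsplit sC
    have hB := hsplit (-sC)
    rw [hsC2] at hA
    rw [show (-sC) ^ 2 = (z:ℂ) by rw [← hsC2]; ring, neg_neg,
      show -(Complex.I * -sC) = Complex.I * sC from by ring] at hB
    rw [show (-sC : ℂ) = (((-s : ℝ)):ℂ) from by push_cast; ring, evalC_ofReal] at hB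
    rw [show (sC : ℂ) = (((s : ℝ)):ℂ) from rfl, evalC_ofReal] at hA
    -- conjugate trick for Z1 factor
    have hconj : (Z1.map (algebraMap ℝ ℂ)).eval (-(Complex.I * sC))
        = (starRingEnd ℂ) ((Z1.map (algebraMap ℝ ℂ)).eval (Complex.I * sC)) := by
      rw [← evalC_conj]
      congr 1
      rw [hsCdef]
      simp [Complex.ext_iff]
    have habsZ1 : ‖(Z1.map (algebraMap ℝ ℂ)).eval (-(Complex.I * sC))‖
        = ‖(Z1.map (algebraMap ℝ ℂ)).eval (Complex.I * sC)‖ := by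
      rw [hconj, Complex.norm_conj]
    have hZ2s : |Z2.eval s| ≤ (2 * ρ2 ^ m2) * |Z2.eval (-s)| := by
      apply sup_ratio Z2 _ _ _ _ hZ2sup s hsmem
      intro u hu
      exact hZ2neR (-u) (by linarith [hu.1])
    have hZ2ms : Z2.eval (-s) ≠ 0 := hZ2neR (-s) (by linarith)
    have hBne : (Z1.map (algebraMap ℝ ℂ)).eval (Complex.I * sC) * ((Z2.eval (-s) : ℝ) : ℂ) ≠ 0 := by
      apply mul_ne_zero _ (Complex.ofReal_ne_zero.mpr hZ2ms)
      apply hZ1neI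
      rw [hsCdef]
      simp [hspos.ne']
    have habs : ‖(Z1.map (algebraMap ℝ ℂ)).eval (-(Complex.I * sC)) * ((Z2.eval s : ℝ) : ℂ)‖
        ≤ (2 * M * ρ ^ (2*n)) * ‖(Z1.map (algebraMap ℝ ℂ)).eval (Complex.I * sC) * ((Z2.eval (-s) : ℝ) : ℂ)‖ := by
      rw [norm_mul, norm_mul, habsZ1, Complex.norm_real, Complex.norm_real, Real.norm_eq_abs, Real.norm_eq_abs]
      have hX : 0 ≤ ‖(Z1.map (algebraMap ℝ ℂ)).eval (Complex.I * sC)‖ := norm_nonneg _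
      have h1 : ‖(Z1.map (algebraMap ℝ ℂ)).eval (Complex.I * sC)‖ * |Z2.eval s|
          ≤ (2 * ρ2 ^ m2) * (‖(Z1.map (algebraMap ℝ ℂ)).eval (Complex.I * sC)‖ * |Z2.eval (-s)|) := by
        rw [mul_comm (‖(Z1.map (algebraMap ℝ ℂ)).eval (Complex.I * sC)‖) (|Z2.eval s|),
          mul_comm (‖(Z1.map (algebraMap ℝ ℂ)).eval (Complex.I * sC)‖) (|Z2.eval (-s)|), ← mul_assoc]
        exact mul_le_mul_of_nonneg_right hZ2s hX
      have h2 : (2 * ρ2 ^ m2) * (‖(Z1.map (algebraMap ℝ ℂ)).eval (Complex.I * sC)‖ * |Z2.eval (-s)|)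
          ≤ (2 * M * ρ ^ (2*n)) * (‖(Z1.map (algebraMap ℝ ℂ)).eval (Complex.I * sC)‖ * |Z2.eval (-s)|) := by
        apply mul_le_mul_of_nonneg_right hb2'
        positivity
      linarith
    obtain ⟨hQne, hbound⟩ := key_ratio sC (P.eval (z:ℂ)) (Q.eval (z:ℂ)) _ _
      (2 * M * ρ ^ (2*n)) hA hB hBne habs hεlt
    refine ⟨hQne, ?_⟩
    have hF : Fbranch z = sC⁻¹ := by
      unfold Fbranch
      rw [if_pos hzpos]
    rw [hF, ← hfinal]
    exact hbound
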